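/- Let R be a discrete valuation ring with uniformizer π, A ∈ R^{k×k} with det A ≠ 0 and elementary divisors π^{e_1} | ... | π^{e_k}, e := e_1+...+e_k. Suppose d_1 ≥ d_2 ≥ ... ≥ d_k ≥ 0 are integers such that for each i, π^{d_i} divides every entry of column i of A. Then e_k ≤ e − (d_2 + ... + d_k). -/

import Mathlib

open Matrix Finset

/-- **Bound on the largest elementary divisor:** if `π^{d_i}` divides every entry of column
`i` of `A` with `d_1 ≥ … ≥ d_k ≥ 0`, and `A` has elementary divisors `π^{e_1} ∣ … ∣ π^{e_k}`
with `e = e_1 + ⋯ + e_k`, then `e_k ≤ e − (d_2 + ⋯ + d_k)`. -/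
theorem last_elementary_divisor_le
    {R : Type*} [CommRing R] [IsDomain R] [IsDiscreteValuationRing R]
    (π : R) (hπ : Irreducible π)
    (k : ℕ) (A : Matrix (Fin (k + 1)) (Fin (k + 1)) R) (hA : A.det ≠ 0)
    (e : Fin (k + 1) → ℕ) (he : Monotone e)
    (S T : Matrix (Fin (k + 1)) (Fin (k + 1)) R)
    (hS : IsUnit S.det) (hT : IsUnit T.det)
    (hSAT : S * A * T = Matrix.diagonal fun i => π ^ e i)
    (d : Fin (k + 1) → ℕ) (hd : Antitone d)
    (hcol : ∀ i j, π ^ d i ∣ A j i) :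
    e (Fin.last k) + ∑ i ∈ Finset.univ.erase 0, d i ≤ ∑ i, e i := by
  classical
  set X := ∑ i ∈ Finset.univ.erase (0 : Fin (k + 1)), d i with hX
  -- factor out the column divisibility: A = B * diagonal (π ^ d)
  choose B hB using fun j i => hcol i j
  have hAfact : A = (Matrix.of fun j i => B j i) * Matrix.diagonal (fun i => π ^ d i) := by
    ext j i
    simp [Matrix.mul_diagonal, hB j i, mul_comm]
  -- every entry of the adjugate of A is divisible by π ^ X
  have hdvdA : ∀ i j, π ^ X ∣ A.adjugate i j := by
    intro i j
    rw [hAfact, Matrix.adjugate_mul_distrib, Matrix.adjugate_diagonal,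
      Matrix.diagonal_mul]
    have h1 : (∏ l ∈ Finset.univ.erase i, π ^ d l) = π ^ ∑ l ∈ Finset.univ.erase i, d l :=
      Finset.prod_pow_eq_pow_sum _ _ _
    have h2 : X ≤ ∑ l ∈ Finset.univ.erase i, d l := by
      have e0 : X + d 0 = ∑ l, d l := Finset.sum_erase_add _ _ (Finset.mem_univ _)
      have ei : (∑ l ∈ Finset.univ.erase i, d l) + d i = ∑ l, d l :=
        Finset.sum_erase_add _ _ (Finset.mem_univ _)
      have := hd (Fin.zero_le i)
      omega
    exact Dvd.dvd.mul_right (h1 ▸ pow_dvd_pow π h2) _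
  -- hence π ^ X divides the (last, last) entry of the adjugate of the diagonal matrix
  have hdiag : Matrix.adjugate (Matrix.diagonal fun i => π ^ e i) =
      T.adjugate * (A.adjugate * S.adjugate) := by
    rw [← hSAT, Matrix.adjugate_mul_distrib, Matrix.adjugate_mul_distrib]
  have hdvdD : π ^ X ∣
      Matrix.adjugate (Matrix.diagonal fun i => π ^ e i) (Fin.last k) (Fin.last k) := by
    rw [hdiag, Matrix.mul_apply]
    refine Finset.dvd_sum fun b _ => ?_
    rw [Matrix.mul_apply, Finset.mul_sum]
    refine Finset.dvd_sum fun c _ => ?_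
    exact ((hdvdA b c).mul_right _).mul_left _
  rw [Matrix.adjugate_diagonal, Matrix.diagonal_apply_eq] at hdvdD
  have h1 : (∏ l ∈ Finset.univ.erase (Fin.last k), π ^ e l)
      = π ^ ∑ l ∈ Finset.univ.erase (Fin.last k), e l :=
    Finset.prod_pow_eq_pow_sum _ _ _
  rw [h1, pow_dvd_pow_iff hπ.ne_zero hπ.not_isUnit] at hdvdD
  have hsum : (∑ l ∈ Finset.univ.erase (Fin.last k), e l) + e (Fin.last k) = ∑ l, e l :=
    Finset.sum_erase_add _ _ (Finset.mem_univ _)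
  omega
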